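/- For l ≥ 1 and m ≥ l, ν₂(A_{2l, 2m}) = 3l + ν₂(A_{l,m}). -/

import Mathlib

open Finset Nat

noncomputable def A (l m : ℕ) : ℚ :=
  ((l.factorial * m.factorial : ℕ) : ℚ) / 2 ^ (m - l) *
    ∑ k ∈ Finset.Icc l m,
      (2 : ℚ) ^ k * ((2 * m - 2 * k).choose (m - k)) * ((m + k).choose m) * (k.choose l)

def Tnat (l m k : ℕ) : ℕ :=
  2 ^ k * ((2 * m - 2 * k).choose (m - k)) * ((m + k).choose m) * (k.choose l)

def Snat (l m : ℕ) : ℕ := ∑ k ∈ Finset.Icc l m, Tnat l m k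

def Gnat (l m k : ℕ) : ℕ :=
  2 * (k - l) * (2 * l * k + (m + 1) * (4 * m + 2 * l + 5)) * 2 ^ k *
    ((2 * m + 2 - 2 * k).choose (m + 1 - k)) * ((m + k).choose k) * (k.choose l)

lemma boundary_id (l d : ℕ) :
    Gnat l (l+d) ((l+d)+1)
    = (4 * (l+d) + 2 * l + 5) * ((l+d) + 1) * ((l+d) + 1 - l) * Tnat l ((l+d)+1) ((l+d)+1)
      + 2 * l * (l + 1) * ((l+d) + 1) * Tnat (l+1) ((l+d)+1) ((l+d)+1) := by
  simp only [Tnat, Gnat]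
  rw [show (l+d)+1 - l = d+1 by omega]
  simp only [show 2*(l+d) + 2 - 2*((l+d)+1) = 0 by omega,
      show (l+d) + 1 - ((l+d)+1) = 0 by omega,
      show 2*((l+d)+1) - 2*((l+d)+1) = 0 by omega,
      show ((l+d)+1) - ((l+d)+1) = 0 by omega,
      show (l+d) + ((l+d)+1) = 2*l+2*d+1 by omega,
      show ((l+d)+1) + ((l+d)+1) = 2*l+2*d+2 by omega]
  apply @Nat.cast_injective ℚ _ _
  push_cast
  have hA : (((2*l+2*d+1).choose ((l+d)+1) : ℕ) : ℚ)
      = ((2*l+2*d+1)! : ℚ) / ((((l+d)+1) * ((l+d)! : ℚ)) * ((l+d)! : ℚ)) := by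
    rw [Nat.cast_choose ℚ (by omega : (l+d)+1 ≤ 2*l+2*d+1),
        show 2*l+2*d+1 - ((l+d)+1) = l+d by omega,
        show ((l+d)+1)! = ((l+d)+1) * (l+d)! from Nat.factorial_succ _]
    push_cast; ring
  have hB : (((2*l+2*d+2).choose ((l+d)+1) : ℕ) : ℚ)
      = ((2*l+2*d+2) * ((2*l+2*d+1)! : ℚ)) / ((((l+d)+1) * ((l+d)! : ℚ)) * (((l+d)+1) * ((l+d)! : ℚ))) := by
    rw [Nat.cast_choose ℚ (by omega : (l+d)+1 ≤ 2*l+2*d+2),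
        show 2*l+2*d+2 - ((l+d)+1) = (l+d)+1 by omega,
        show (2*l+2*d+2)! = (2*l+2*d+2) * (2*l+2*d+1)! from Nat.factorial_succ _,
        show ((l+d)+1)! = ((l+d)+1) * (l+d)! from Nat.factorial_succ _]
    push_cast; ring
  have hC : ((((l+d)+1).choose l : ℕ) : ℚ)
      = (((l+d)+1) * ((l+d)! : ℚ)) / ((l ! : ℚ) * ((d+1) * (d ! : ℚ))) := by
    rw [Nat.cast_choose ℚ (by omega : l ≤ (l+d)+1),
        show (l+d)+1 - l = d+1 by omega,
        show ((l+d)+1)! = ((l+d)+1) * (l+d)! from Nat.factorial_succ _,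
        show (d+1)! = (d+1) * d ! from Nat.factorial_succ _]
    push_cast; ring
  have hD : ((((l+d)+1).choose (l+1) : ℕ) : ℚ)
      = ((d+1) : ℚ) * ((((l+d)+1).choose l : ℕ) : ℚ) / ((l:ℚ)+1) := by
    have h := Nat.choose_succ_right_eq ((l+d)+1) l
    rw [show (l+d)+1 - l = d+1 by omega] at h
    have h2 : ((((l+d)+1).choose (l+1) : ℕ) : ℚ) * ((l:ℚ)+1)
        = ((((l+d)+1).choose l : ℕ) : ℚ) * ((d:ℚ)+1) := by exact_mod_cast congrArg (Nat.cast : ℕ → ℚ) h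
    field_simp
    linear_combination h2
  rw [hD, hA, hB, hC]
  have h1 : (((l+d)! : ℕ) : ℚ) ≠ 0 := Nat.cast_ne_zero.mpr (Nat.factorial_ne_zero _)
  have h2 : ((l ! : ℕ) : ℚ) ≠ 0 := Nat.cast_ne_zero.mpr (Nat.factorial_ne_zero _)
  have h3 : ((d ! : ℕ) : ℚ) ≠ 0 := Nat.cast_ne_zero.mpr (Nat.factorial_ne_zero _)
  field_simp
  ring

lemma Gnat_bot (l m : ℕ) : Gnat l m l = 0 := by simp [Gnat]

lemma telescope (l m : ℕ) (h : l ≤ m) (f : ℕ → ℕ) :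
    ∑ k ∈ Icc l m, f k + f (m+1) = ∑ k ∈ Icc l m, f (k+1) + f l := by
  induction m with
  | zero =>
      interval_cases l
      simp [Nat.add_comm]
  | succ n ih =>
      rcases Nat.lt_or_ge n l with h' | h'
      · have : l = n + 1 := by omega
        subst this
        simp [Nat.add_comm]
      · rw [Finset.sum_Icc_succ_top (by omega : l ≤ n+1) f,
            Finset.sum_Icc_succ_top (by omega : l ≤ n+1) (fun k => f (k+1))]
        have := ih h'
        omega

lemma local_id0 (l i j : ℕ) :
    2 * (4 * (l+i+j) + 3) * (4 * (l+i+j) + 5) * ((l+i+j) + l + 1) * Tnat l (l+i+j) (l+i)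
      + Gnat l (l+i+j) (l+i)
    = (4 * (l+i+j) + 2 * l + 5) * ((l+i+j) + 1) * ((l+i+j) + 1 - l) * Tnat l ((l+i+j)+1) (l+i)
      + 2 * l * (l + 1) * ((l+i+j) + 1) * Tnat (l+1) ((l+i+j)+1) (l+i)
      + Gnat l (l+i+j) ((l+i)+1) := by
  simp only [Tnat, Gnat]
  rw [show 2 * (l+i+j) - 2 * (l+i) = 2*j by omega,
      show (l+i+j) - (l+i) = j by omega,
      show (l+i) - l = i by omega,
      show 2 * ((l+i+j)+1) - 2 * (l+i) = 2*j+2 by omega,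
      show ((l+i+j)) + 1 - l = i+j+1 by omega,
      show 2 * (l+i+j) + 2 - 2 * (l+i) = 2*j+2 by omega,
      show (l+i+j) + 1 - (l+i) = j+1 by omega,
      show (l+i) + 1 - l = i+1 by omega,
      show 2 * (l+i+j) + 2 - 2 * ((l+i)+1) = 2*j by omega,
      show (l+i+j) + 1 - ((l+i)+1) = j by omega]
  have hQ := @Nat.cast_injective ℚ _ _
  apply hQ
  push_cast
  -- choose → factorial ratios, in ℚ
  have hca : (((2*j).choose j : ℕ) : ℚ) = ((2*j)! : ℚ) / ((j ! : ℚ) * (j ! : ℚ)) := by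
    rw [Nat.cast_choose ℚ (by omega : j ≤ 2*j), show 2*j - j = j by omega]
  have hcb : (((2*j+2).choose (j+1) : ℕ) : ℚ)
      = ((2*j+2)! : ℚ) / (((j+1)! : ℚ) * ((j+1)! : ℚ)) := by
    rw [Nat.cast_choose ℚ (by omega : j+1 ≤ 2*j+2), show 2*j+2 - (j+1) = j+1 by omega]
  have hcc : (((l+i+j+(l+i)).choose (l+i+j) : ℕ) : ℚ)
      = ((2*l+2*i+j)! : ℚ) / (((l+i+j)! : ℚ) * ((l+i)! : ℚ)) := by
    rw [Nat.cast_choose ℚ (by omega : l+i+j ≤ l+i+j+(l+i)),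
        show l+i+j+(l+i) - (l+i+j) = l+i by omega,
        show l+i+j+(l+i) = 2*l+2*i+j by omega]
  have hcg : (((l+i+j+(l+i)).choose (l+i) : ℕ) : ℚ)
      = ((2*l+2*i+j)! : ℚ) / (((l+i+j)! : ℚ) * ((l+i)! : ℚ)) := by
    rw [Nat.cast_choose ℚ (by omega : l+i ≤ l+i+j+(l+i)),
        show l+i+j+(l+i) - (l+i) = l+i+j by omega,
        show l+i+j+(l+i) = 2*l+2*i+j by omega]
    ring
  have hcd : (((l+i+j+1+(l+i)).choose (l+i+j+1) : ℕ) : ℚ)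
      = ((2*l+2*i+j+1) * ((2*l+2*i+j)! : ℚ)) / (((l+i+j+1) * ((l+i+j)! : ℚ)) * ((l+i)! : ℚ)) := by
    rw [Nat.cast_choose ℚ (by omega : l+i+j+1 ≤ l+i+j+1+(l+i)),
        show l+i+j+1+(l+i) - (l+i+j+1) = l+i by omega,
        show l+i+j+1+(l+i) = (2*l+2*i+j)+1 by omega,
        Nat.factorial_succ, Nat.factorial_succ]
    push_cast; ring
  have hch : (((l+i+j+(l+i+1)).choose (l+i+1) : ℕ) : ℚ)
      = ((2*l+2*i+j+1) * ((2*l+2*i+j)! : ℚ)) / (((l+i+1) * ((l+i)! : ℚ)) * ((l+i+j)! : ℚ)) := by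
    rw [Nat.cast_choose ℚ (by omega : l+i+1 ≤ l+i+j+(l+i+1)),
        show l+i+j+(l+i+1) - (l+i+1) = l+i+j by omega,
        show l+i+j+(l+i+1) = (2*l+2*i+j)+1 by omega,
        Nat.factorial_succ, Nat.factorial_succ]
    push_cast; ring
  have hce : (((l+i).choose l : ℕ) : ℚ) = ((l+i)! : ℚ) / ((l ! : ℚ) * (i ! : ℚ)) := by
    rw [Nat.cast_choose ℚ (by omega : l ≤ l+i), show l+i - l = i by omega]
  have hcf : (((l+i).choose (l+1) : ℕ) : ℚ)
      = (i : ℚ) * ((l+i)! : ℚ) / (((l+1) : ℚ) * ((l ! : ℚ) * (i ! : ℚ))) := by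
    have h := Nat.choose_succ_right_eq (l+i) l
    rw [show l+i - l = i by omega] at h
    have h2 : (((l+i).choose (l+1) : ℕ) : ℚ) * ((l:ℚ)+1) = ((l+i).choose l : ℕ) * (i : ℚ) := by
      exact_mod_cast congrArg (Nat.cast : ℕ → ℚ) h
    rw [hce] at h2
    field_simp at h2 ⊢
    linear_combination h2
  have hci : (((l+i+1).choose l : ℕ) : ℚ)
      = ((l+i+1) : ℚ) * ((l+i)! : ℚ) / ((l ! : ℚ) * (((i+1) : ℚ) * (i ! : ℚ))) := by
    rw [Nat.cast_choose ℚ (by omega : l ≤ l+i+1), show l+i+1 - l = i+1 by omega,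
        show (l+i+1)! = (l+i+1) * (l+i)! from Nat.factorial_succ _,
        show (i+1)! = (i+1) * i ! from Nat.factorial_succ _]
    push_cast; ring
  rw [hca, hcb, hcc, hcg, hcd, hch, hce, hcf, hci,
      show ((2*j+2)! : ℕ) = (2*j+2) * ((2*j+1) * (2*j)!) by
        rw [show (2*j+2) = (2*j+1)+1 by omega, Nat.factorial_succ, Nat.factorial_succ],
      show ((j+1)! : ℕ) = (j+1) * j ! from Nat.factorial_succ _]
  have hj : ((j ! : ℕ) : ℚ) ≠ 0 := Nat.cast_ne_zero.mpr (Nat.factorial_ne_zero _)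
  have hi : ((i ! : ℕ) : ℚ) ≠ 0 := Nat.cast_ne_zero.mpr (Nat.factorial_ne_zero _)
  have hlf : ((l ! : ℕ) : ℚ) ≠ 0 := Nat.cast_ne_zero.mpr (Nat.factorial_ne_zero _)
  have hu : (((l+i)! : ℕ) : ℚ) ≠ 0 := Nat.cast_ne_zero.mpr (Nat.factorial_ne_zero _)
  have hw : (((l+i+j)! : ℕ) : ℚ) ≠ 0 := Nat.cast_ne_zero.mpr (Nat.factorial_ne_zero _)
  push_cast
  field_simp
  ring

lemma local_id' (l m k : ℕ) (h1 : l ≤ k) (h2 : k ≤ m) :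
    2 * (4*m + 3) * (4*m + 5) * (m + l + 1) * Tnat l m k + Gnat l m k
    = (4*m + 2*l + 5) * (m + 1) * (m + 1 - l) * Tnat l (m+1) k
      + 2 * l * (l + 1) * (m + 1) * Tnat (l+1) (m+1) k + Gnat l m (k+1) := by
  obtain ⟨i, rfl⟩ := Nat.exists_eq_add_of_le h1
  obtain ⟨j, rfl⟩ := Nat.exists_eq_add_of_le h2
  exact local_id0 l i j

lemma Tnat_bot (l m : ℕ) : Tnat (l+1) m l = 0 := by
  simp [Tnat, Nat.choose_eq_zero_of_lt (by omega : l < l+1)]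

lemma Srec (l m : ℕ) (h : l ≤ m) :
    2 * (4 * m + 3) * (4 * m + 5) * (m + l + 1) * Snat l m
    = (4 * m + 2 * l + 5) * (m + 1) * (m + 1 - l) * Snat l (m + 1)
      + 2 * l * (l + 1) * (m + 1) * Snat (l + 1) (m + 1) := by
  obtain ⟨d, rfl⟩ := Nat.exists_eq_add_of_le h
  set m := l + d with hm
  have e1 : ∑ k ∈ Icc l m, (2 * (4*m + 3) * (4*m + 5) * (m + l + 1) * Tnat l m k + Gnat l m k)
      = ∑ k ∈ Icc l m, ((4*m + 2*l + 5) * (m + 1) * (m + 1 - l) * Tnat l (m+1) k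
          + 2 * l * (l + 1) * (m + 1) * Tnat (l+1) (m+1) k + Gnat l m (k+1)) :=
    Finset.sum_congr rfl fun k hk => by
      obtain ⟨hk1, hk2⟩ := Finset.mem_Icc.mp hk
      exact local_id' l m k hk1 hk2
  simp only [Finset.sum_add_distrib, ← Finset.mul_sum] at e1
  have e2 := telescope l m (by omega) (Gnat l m)
  rw [Gnat_bot] at e2
  have e3 : Snat l (m+1) = ∑ k ∈ Icc l m, Tnat l (m+1) k + Tnat l (m+1) (m+1) := by
    unfold Snat
    rw [Finset.sum_Icc_succ_top (by omega : l ≤ m+1)]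
  have e4 : Snat (l+1) (m+1) = ∑ k ∈ Icc l m, Tnat (l+1) (m+1) k + Tnat (l+1) (m+1) (m+1) := by
    unfold Snat
    rw [Finset.sum_Icc_succ_top (by omega : l+1 ≤ m+1)]
    congr 1
    rcases Nat.eq_or_lt_of_le (by omega : l ≤ m) with h' | h'
    · rw [show Icc (l+1) m = ∅ by rw [Finset.Icc_eq_empty_iff]; omega,
         show Icc l m = {l} by rw [← h']; exact Finset.Icc_self l]
      simp [Tnat_bot]
    · have : Icc l m = insert l (Icc (l+1) m) := by
        ext x; simp only [Finset.mem_Icc, Finset.mem_insert]; omega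
      rw [this, Finset.sum_insert (by simp)]
      rw [Tnat_bot]
      simp
  have e5 := boundary_id l d
  rw [← hm] at e5
  rw [show Snat l m = ∑ k ∈ Icc l m, Tnat l m k from rfl]
  rw [show m + 1 - l = d + 1 by omega] at e1 e5 ⊢
  zify at e1 e2 e3 e4 e5 ⊢
  linear_combination e1 - e2 - ((4*(m:ℤ) + 2*l + 5) * ((m:ℤ) + 1) * ((d:ℤ) + 1)) * e3
    - (2 * (l:ℤ) * ((l:ℤ) + 1) * ((m:ℤ) + 1)) * e4 + e5

lemma Snat_pos (l m : ℕ) (h : l ≤ m) : 0 < Snat l m := by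
  have hT : 0 < Tnat l m m := by
    unfold Tnat
    rw [Nat.sub_self, Nat.sub_self]
    have h1 : 0 < (m + m).choose m := Nat.choose_pos (by omega)
    have h2 : 0 < m.choose l := Nat.choose_pos h
    have h3 : 0 < 2^m := Nat.pow_pos (by omega)
    simp only [Nat.choose_self]
    positivity
  exact lt_of_lt_of_le hT
    (Finset.single_le_sum (fun k _ => Nat.zero_le _) (Finset.mem_Icc.mpr ⟨h, le_rfl⟩))

noncomputable def Bq (l d : ℕ) : ℚ :=
  ((l ! * (l+d)! * d ! * Snat l (l+d) : ℕ) : ℚ) / ((2^(l+d) * (2*l+d)! : ℕ) : ℚ)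

lemma Bq_zero (l : ℕ) : Bq l 0 = 1 := by
  unfold Bq Snat
  rw [Nat.add_zero, Nat.add_zero, Finset.Icc_self, Finset.sum_singleton]
  unfold Tnat
  rw [Nat.sub_self, Nat.sub_self]
  simp only [Nat.choose_self]
  rw [two_mul]
  have hc := Nat.add_choose_mul_factorial_mul_factorial l l
  push_cast
  have h2 : ((2:ℚ))^l ≠ 0 := by positivity
  have hf : (((l+l)! : ℕ) : ℚ) ≠ 0 := Nat.cast_ne_zero.mpr (Nat.factorial_ne_zero _)
  rw [div_eq_one_iff_eq (by positivity)]
  push_cast [← hc, Nat.factorial_zero]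
  ring

lemma Bq_rec (l d : ℕ) :
    (4*((l:ℚ)+d)+3) * (4*((l:ℚ)+d)+5) * Bq l d
    = (4*((l:ℚ)+d)+2*l+5) * Bq l (d+1) + 2*l*(((l:ℚ)+d)+l+2) * Bq (l+1) d := by
  have hS := Srec l (l+d) (by omega)
  rw [show (l+d) + 1 - l = d + 1 by omega] at hS
  have hSQ : (2*(4*((l:ℚ)+d)+3) * (4*((l:ℚ)+d)+5) * (((l:ℚ)+d)+l+1)) * (Snat l (l+d) : ℚ)
      = ((4*((l:ℚ)+d)+2*(l:ℚ)+5) * (((l:ℚ)+d)+1) * ((d:ℚ)+1)) * (Snat l ((l+d)+1) : ℚ)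
        + (2*(l:ℚ)*((l:ℚ)+1)*(((l:ℚ)+d)+1)) * (Snat (l+1) ((l+d)+1) : ℚ) := by
    exact_mod_cast congrArg (Nat.cast : ℕ → ℚ) hS
  unfold Bq
  rw [show l+(d+1) = (l+d)+1 by omega, show (l+1)+d = (l+d)+1 by omega,
      show 2*l+(d+1) = (2*l+d)+1 by omega, show 2*(l+1)+d = ((2*l+d)+1)+1 by omega,
      show ((l+d)+1)! = ((l+d)+1) * (l+d)! from Nat.factorial_succ _,
      show (d+1)! = (d+1) * d ! from Nat.factorial_succ _,
      show (l+1)! = (l+1) * l ! from Nat.factorial_succ _,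
      show (((2*l+d)+1)+1)! = (((2*l+d)+1)+1) * (((2*l+d)+1)) * ((2*l+d)!)
        from by rw [Nat.factorial_succ, Nat.factorial_succ]; ring,
      show ((2*l+d)+1)! = ((2*l+d)+1) * ((2*l+d)!) from Nat.factorial_succ _,
      pow_succ]
  push_cast
  have hf1 : ((l ! : ℕ) : ℚ) ≠ 0 := Nat.cast_ne_zero.mpr (Nat.factorial_ne_zero _)
  have hf2 : (((l+d)! : ℕ) : ℚ) ≠ 0 := Nat.cast_ne_zero.mpr (Nat.factorial_ne_zero _)
  have hf3 : ((d ! : ℕ) : ℚ) ≠ 0 := Nat.cast_ne_zero.mpr (Nat.factorial_ne_zero _)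
  have hf4 : (((2*l+d)! : ℕ) : ℚ) ≠ 0 := Nat.cast_ne_zero.mpr (Nat.factorial_ne_zero _)
  have hp : ((2:ℚ))^(l+d) ≠ 0 := by positivity
  have hq1 : ((2*l+d : ℚ)+1) ≠ 0 := by positivity
  field_simp
  linear_combination (2*(l:ℚ)+(d:ℚ)+2) * hSQ

lemma val_odd_nat (n : ℕ) (h : n % 2 = 1) : padicValNat 2 n = 0 :=
  padicValNat.eq_zero_of_not_dvd (by omega)

lemma Bq_pos (l d : ℕ) : 0 < Bq l d := by
  unfold Bq
  apply _root_.div_pos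
  · have h1 := Snat_pos l (l+d) (by omega)
    have h2 := Nat.factorial_pos l
    have h3 := Nat.factorial_pos (l+d)
    have h4 := Nat.factorial_pos d
    exact_mod_cast Nat.mul_pos (Nat.mul_pos (Nat.mul_pos h2 h3) h4) h1
  · have h5 := Nat.factorial_pos (2*l+d)
    have h6 : 0 < 2^(l+d) := Nat.pow_pos (by omega)
    exact_mod_cast Nat.mul_pos h6 h5

lemma Bq_val (d : ℕ) : ∀ l, padicValRat 2 (Bq l d) = 0 := by
  induction d with
  | zero => intro l; rw [Bq_zero]; exact padicValRat.one
  | succ d ih =>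
    intro l
    have hrec := Bq_rec l d
    have hB1 := Bq_pos l d
    have hB2 := Bq_pos l (d+1)
    have hB3 := Bq_pos (l+1) d
    have hden : (4*((l:ℚ)+d)+2*(l:ℚ)+5) > 0 := by positivity
    have h2 : Bq l (d+1) = ((4*((l:ℚ)+d)+3) * (4*((l:ℚ)+d)+5) * Bq l d
        + (-(2*(l:ℚ)*(((l:ℚ)+d)+(l:ℚ)+2)) * Bq (l+1) d)) / (4*((l:ℚ)+d)+2*(l:ℚ)+5) := by
      rw [eq_div_iff (by positivity)]
      linear_combination -hrec
    have hx : (4*((l:ℚ)+d)+3) * (4*((l:ℚ)+d)+5) * Bq l d ≠ 0 := by positivity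
    have hvx : padicValRat 2 ((4*((l:ℚ)+d)+3) * (4*((l:ℚ)+d)+5) * Bq l d) = 0 := by
      rw [padicValRat.mul (by positivity) (by positivity),
          padicValRat.mul (by positivity) (by positivity), ih l,
          show (4*((l:ℚ)+d)+3) = ((4*(l+d)+3 : ℕ) : ℚ) by push_cast; ring,
          show (4*((l:ℚ)+d)+5) = ((4*(l+d)+5 : ℕ) : ℚ) by push_cast; ring,
          padicValRat.of_nat, padicValRat.of_nat,
          val_odd_nat _ (by omega), val_odd_nat _ (by omega)]
      simp
    have hvden : padicValRat 2 (4*((l:ℚ)+d)+2*(l:ℚ)+5) = 0 := by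
      rw [show (4*((l:ℚ)+d)+2*(l:ℚ)+5) = ((4*(l+d)+2*l+5 : ℕ) : ℚ) by push_cast; ring,
          padicValRat.of_nat, val_odd_nat _ (by omega)]
      simp
    rcases Nat.eq_zero_or_pos l with rfl | hl
    · rw [h2,
        show (-(2 * ((0:ℕ):ℚ) * (((0:ℕ):ℚ) + (d:ℚ) + ((0:ℕ):ℚ) + 2)) * Bq (0+1) d) = 0 by
          push_cast; ring,
        add_zero, padicValRat.div hx (ne_of_gt hden), hvx, hvden]
      ring
    · have hy : (-(2*(l:ℚ)*(((l:ℚ)+d)+(l:ℚ)+2)) * Bq (l+1) d) ≠ 0 := by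
        have : (0:ℚ) < l := by exact_mod_cast hl
        have : (2*(l:ℚ)*(((l:ℚ)+d)+(l:ℚ)+2)) * Bq (l+1) d > 0 := by positivity
        intro hcon
        nlinarith
      have hvy : 0 < padicValRat 2 (-(2*(l:ℚ)*(((l:ℚ)+d)+(l:ℚ)+2)) * Bq (l+1) d) := by
        have hlq : (0:ℚ) < l := by exact_mod_cast hl
        rw [show (-(2*(l:ℚ)*(((l:ℚ)+d)+(l:ℚ)+2)) * Bq (l+1) d)
            = -( ((2*l*(l+d+l+2) : ℕ) : ℚ) * Bq (l+1) d) by push_cast; ring,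
          padicValRat.neg,
          padicValRat.mul (by positivity) (by positivity), ih (l+1),
          padicValRat.of_nat]
        have : 1 ≤ padicValNat 2 (2*l*(l+d+l+2)) := by
          apply one_le_padicValNat_of_dvd (by positivity) ⟨l*(l+d+l+2), by ring⟩
        omega
      have hsum : (4*((l:ℚ)+d)+3) * (4*((l:ℚ)+d)+5) * Bq l d
          + (-(2*(l:ℚ)*(((l:ℚ)+d)+(l:ℚ)+2)) * Bq (l+1) d) ≠ 0 := by
        intro hcon
        rw [hcon, zero_div] at h2
        exact (ne_of_gt hB2) h2
      rw [h2, padicValRat.div hsum (by positivity),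
          padicValRat.add_eq_of_lt hsum hx hy (by rw [hvx]; exact hvy), hvx, hvden]
      ring

lemma vfac (n : ℕ) : padicValNat 2 ((2*n)!) = n + padicValNat 2 (n !) := by
  induction n with
  | zero => simp
  | succ n ih =>
    have h1 : (2*(n+1))! = (2*n+2) * ((2*n+1) * (2*n)!) := by
      rw [show 2*(n+1) = (2*n+1)+1 by omega, Nat.factorial_succ, Nat.factorial_succ]
    rw [h1, padicValNat.mul (by omega) (by positivity),
        padicValNat.mul (by omega) (Nat.factorial_ne_zero _), ih,
        val_odd_nat (2*n+1) (by omega),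
        show (2*n+2) = 2*(n+1) by omega,
        padicValNat.mul (by omega) (by omega),
        show (n+1)! = (n+1) * n ! from Nat.factorial_succ _,
        padicValNat.mul (by omega) (Nat.factorial_ne_zero _)]
    have : padicValNat 2 2 = 1 := padicValNat.self (by omega)
    omega

lemma A_eq (l m : ℕ) : A l m
    = ((l ! * m ! : ℕ) : ℚ) / 2 ^ (m - l) * ((Snat l m : ℕ) : ℚ) := by
  unfold A Snat
  congr 1
  rw [Nat.cast_sum]
  refine Finset.sum_congr rfl fun k hk => ?_
  unfold Tnat
  push_cast
  ring

lemma val_A (l d : ℕ) : padicValRat 2 (A l (l+d))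
    = (l : ℤ) + padicValNat 2 ((2*l+d)!) - padicValNat 2 (d !) := by
  have hBv := Bq_val d l
  unfold Bq at hBv
  have hS := Snat_pos l (l+d) (by omega)
  have hSne : (((Snat l (l+d) : ℕ)) : ℚ) ≠ 0 := by exact_mod_cast hS.ne'
  have hfl : ((l ! : ℕ) : ℚ) ≠ 0 := Nat.cast_ne_zero.mpr (Nat.factorial_ne_zero _)
  have hfld : (((l+d)! : ℕ) : ℚ) ≠ 0 := Nat.cast_ne_zero.mpr (Nat.factorial_ne_zero _)
  have hfd : ((d ! : ℕ) : ℚ) ≠ 0 := Nat.cast_ne_zero.mpr (Nat.factorial_ne_zero _)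
  have hf2 : (((2*l+d)! : ℕ) : ℚ) ≠ 0 := Nat.cast_ne_zero.mpr (Nat.factorial_ne_zero _)
  have hpw : ((2:ℚ))^(l+d) ≠ 0 := by positivity
  -- decompose hBv
  rw [show ((l ! * (l+d)! * d ! * Snat l (l+d) : ℕ) : ℚ)
        = ((l ! : ℕ) : ℚ) * (((l+d)! : ℕ) : ℚ) * ((d ! : ℕ) : ℚ) * ((Snat l (l+d) : ℕ) : ℚ)
        by push_cast; ring,
      show ((2^(l+d) * (2*l+d)! : ℕ) : ℚ) = (2:ℚ)^(l+d) * (((2*l+d)! : ℕ) : ℚ)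
        by push_cast; ring,
      padicValRat.div (by positivity) (by positivity),
      padicValRat.mul (by positivity) hSne,
      padicValRat.mul (by positivity) hfd,
      padicValRat.mul hfl hfld,
      padicValRat.mul hpw hf2,
      show ((2:ℚ)) = ((2:ℕ) : ℚ) by norm_num,
      ← Nat.cast_pow] at hBv
  simp only [padicValRat.of_nat, padicValNat.prime_pow] at hBv
  rw [A_eq, show (l+d) - l = d by omega,
      padicValRat.mul (by positivity) hSne,
      padicValRat.div (by positivity) (by positivity),
      show ((l ! * (l+d)! : ℕ) : ℚ) = ((l ! : ℕ) : ℚ) * (((l+d)! : ℕ) : ℚ) by push_cast; ring,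
      padicValRat.mul hfl hfld,
      show ((2:ℚ)) = ((2:ℕ) : ℚ) by norm_num,
      ← Nat.cast_pow]
  simp only [padicValRat.of_nat, padicValNat.prime_pow]
  omega

theorem val_A_double (l m : ℕ) (hl : 1 ≤ l) (hm : l ≤ m) :
    padicValRat 2 (A (2 * l) (2 * m)) = 3 * l + padicValRat 2 (A l m) := by
  obtain ⟨d, rfl⟩ := Nat.exists_eq_add_of_le hm
  rw [show 2 * (l + d) = 2*l + 2*d by ring, val_A (2*l) (2*d), val_A l d,
      show 2*(2*l) + 2*d = 2*(2*l+d) by ring, vfac (2*l+d), vfac d]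
  push_cast
  ring
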